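/- For nonzero purely imaginary quaternions a, b, c, d ∈ Quaternion ℝ, the normalized real part of the cross-ratio-type product q = a*b⁻¹*c*d⁻¹ satisfies −(a*b⁻¹*c*d⁻¹).re / ‖a*b⁻¹*c*d⁻¹‖ = ((a*c).re*(b*d).re − (a*b).re*(c*d).re − (b*c).re*(d*a).re) / (‖a‖*‖b‖*‖c‖*‖d‖). (In the geometric interpretation, where a,b,c,d are the oriented edge vectors of two triangles sharing an edge, this common value is the cosine of the external intersection angle of their circumcircles.) -/

import Mathlib

open Quaternion

theorem key (a b c d : Quaternion ℝ)
    (ha : a.re = 0) (hb : b.re = 0) (hc : c.re = 0) (hd : d.re = 0) :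
    -(a * b * c * d).re =
      (a * c).re * (b * d).re - (a * b).re * (c * d).re - (b * c).re * (d * a).re := by
  simp only [Quaternion.re_mul, Quaternion.imI_mul, Quaternion.imJ_mul, Quaternion.imK_mul,
    ha, hb, hc, hd]
  ring

/-- Formula for the cosine of the external intersection angle of circumcircles in
terms of the cross-ratio-type product `q = a * b⁻¹ * c * d⁻¹` of nonzero purely
imaginary quaternions. -/
theorem cos_beta_formula
    (a b c d : Quaternion ℝ)
    (ha : a.re = 0) (hb : b.re = 0) (hc : c.re = 0) (hd : d.re = 0)
    (ha0 : a ≠ 0) (hb0 : b ≠ 0) (hc0 : c ≠ 0) (hd0 : d ≠ 0) :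
    -(a * b⁻¹ * c * d⁻¹).re / ‖a * b⁻¹ * c * d⁻¹‖ =
      ((a * c).re * (b * d).re - (a * b).re * (c * d).re - (b * c).re * (d * a).re) /
        (‖a‖ * ‖b‖ * ‖c‖ * ‖d‖) := by
  have sb : star b = -b := by ext <;> simp [hb]
  have sd : star d = -d := by ext <;> simp [hd]
  have hbi : b⁻¹ = -((normSq b : ℝ)⁻¹ • b) := by
    rw [Quaternion.inv_def, sb, smul_neg]
  have hdi : d⁻¹ = -((normSq d : ℝ)⁻¹ • d) := by
    rw [Quaternion.inv_def, sd, smul_neg]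
  have hq : a * b⁻¹ * c * d⁻¹ =
      ((normSq b : ℝ)⁻¹ * (normSq d : ℝ)⁻¹) • (a * b * c * d) := by
    rw [hbi, hdi]
    simp only [mul_neg, neg_mul, neg_neg, mul_smul_comm, smul_mul_assoc, smul_smul]
    rw [smul_neg, neg_neg, smul_smul, mul_comm]
  have hnorm : ‖a * b⁻¹ * c * d⁻¹‖ = ‖a‖ * ‖b‖⁻¹ * ‖c‖ * ‖d‖⁻¹ := by
    simp [norm_mul, norm_inv]
  have hre : (a * b⁻¹ * c * d⁻¹).re =
      ((normSq b : ℝ)⁻¹ * (normSq d : ℝ)⁻¹) * (a * b * c * d).re := by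
    rw [hq]; simp [Quaternion.re_smul]
  have hna : (0:ℝ) < ‖a‖ := norm_pos_iff.mpr ha0
  have hnb : (0:ℝ) < ‖b‖ := norm_pos_iff.mpr hb0
  have hnc : (0:ℝ) < ‖c‖ := norm_pos_iff.mpr hc0
  have hnd : (0:ℝ) < ‖d‖ := norm_pos_iff.mpr hd0
  have nb : (normSq b : ℝ) = ‖b‖ * ‖b‖ := Quaternion.normSq_eq_norm_mul_self b
  have nd : (normSq d : ℝ) = ‖d‖ * ‖d‖ := Quaternion.normSq_eq_norm_mul_self d
  rw [hre, hnorm, nb, nd, ← key a b c d ha hb hc hd]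
  field_simp
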